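/- (Pointwise sufficient condition, feature-label, ε > 0.) Let P = α₁·P₁ + α₂·P₂ + (1−α)·P₀ with α₁ > 0, α₂ ≥ 0, α = α₁ + α₂ ≤ 1, where P₁ is the feature-label collective distribution with target y₁* and signal map g₁, and P₂ is an arbitrary PMF on X × Y. Fix ε₁ ∈ [0, 1/2) and let x ∈ X₁ satisfy P₁(x) > 0. If α₁·(1−2ε₁)·P₁(x) > α₂·P₂(x)·((1−ε₁)·Δ_{P₂,x}(y₁*) + ε₁) + (1−α)·P₀(x)·((1−ε₁)·Δ_{P₀,x}(y₁*) + ε₁), then the mixture satisfies P(x, y₁*) > P(x, y) + (ε₁/(1−ε₁))·P(x) for every y ≠ y₁*. -/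
import Mathlib


open Finset

noncomputable section

variable {X Y : Type*}

/-- A probability mass function on `X × Y`. -/
def IsPMF [Fintype X] [Fintype Y] (P : X × Y → ℝ) : Prop :=
  (∀ z, 0 ≤ P z) ∧ ∑ z, P z = 1

/-- The `X`-marginal `P(x) = ∑_y P(x,y)`. -/
def marg [Fintype Y] (P : X × Y → ℝ) (x : X) : ℝ := ∑ y, P (x, y)

/-- The conditional probability `P(y | x) = P(x,y) / P(x)` (zero when `P(x) = 0`,
by the `division by zero = 0` convention). -/
def condProb [Fintype Y] (P : X × Y → ℝ) (y : Y) (x : X) : ℝ := P (x, y) / marg P x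

/-- Pointwise suboptimality gap `Δ_{Q,x}(y*) = max_y Q(y|x) − Q(y*|x)` when `Q(x) > 0`,
and `0` otherwise. -/
def gapAt [Fintype Y] [Nonempty Y] (Q : X × Y → ℝ) (x : X) (ystar : Y) : ℝ :=
  if 0 < marg Q x then
    (Finset.univ.sup' Finset.univ_nonempty fun y => condProb Q y x) - condProb Q ystar x
  else 0

/-- Suboptimality gap `Δ_Q(X₁, y*) = max_{x ∈ X₁} Δ_{Q,x}(y*)` of the signal set
`X₁ = g(X)` on `Q`. -/
def gapSig [Fintype X] [Fintype Y] [Nonempty X] [Nonempty Y] [DecidableEq X]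
    (Q : X × Y → ℝ) (g : X → X) (ystar : Y) : ℝ :=
  (Finset.univ.image g).sup' (Finset.univ_nonempty.image g) fun x => gapAt Q x ystar

/-- Overlap `Q(X₁) = ∑_{x ∈ X₁} Q(x)` of `Q` with the signal set `X₁ = g(X)`. -/
def overlap [Fintype X] [Fintype Y] [DecidableEq X] (Q : X × Y → ℝ) (g : X → X) : ℝ :=
  ∑ x ∈ Finset.univ.image g, marg Q x

/-- Total variation distance between two PMFs on `X × Y`. -/
def tvDist [Fintype X] [Fintype Y] (P P' : X × Y → ℝ) : ℝ :=
  (1 / 2) * ∑ z, |P z - P' z|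

/-- A classifier `f` is `ε`-suboptimal under `P` if there is a PMF `P'` within total
variation `ε` of `P` such that `f x` maximizes `y ↦ P'(y|x)` for every `x` with
`P'(x) > 0`. -/
def Suboptimal [Fintype X] [Fintype Y] (P : X × Y → ℝ) (ε : ℝ) (f : X → Y) : Prop :=
  ∃ P' : X × Y → ℝ, IsPMF P' ∧ tvDist P P' ≤ ε ∧
    ∀ x, 0 < marg P' x → ∀ y, condProb P' y x ≤ condProb P' (f x) x

/-- Pushforward of `P` along a map `m : X × Y → X × Y`. -/
def pushforward [Fintype X] [Fintype Y] [DecidableEq X] [DecidableEq Y]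
    (m : X × Y → X × Y) (P : X × Y → ℝ) : X × Y → ℝ :=
  fun z => ∑ w ∈ Finset.univ.filter (fun w => m w = z), P w

/-- Success rate `S = Pr_{x ∼ P₀-X-marginal}[f (g x) = y*]`. -/
def successRate [Fintype X] [Fintype Y] [DecidableEq Y]
    (P0 : X × Y → ℝ) (f : X → Y) (g : X → X) (ystar : Y) : ℝ :=
  ∑ x ∈ Finset.univ.filter (fun x => f (g x) = ystar), marg P0 x

/-- Mass `P₀(g⁻¹({x*}))` of the preimage of `x*` under the `X`-marginal of `P₀`. -/
def preMass [Fintype X] [Fintype Y] [DecidableEq X]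
    (P0 : X × Y → ℝ) (g : X → X) (xstar : X) : ℝ :=
  ∑ x ∈ Finset.univ.filter (fun x => g x = xstar), marg P0 x

lemma gap_bound_aux [Fintype Y] [Nonempty Y] (Q : X × Y → ℝ) (hQ : ∀ z, 0 ≤ Q z)
    (x : X) (y1 y : Y) : Q (x, y) - Q (x, y1) ≤ marg Q x * gapAt Q x y1 := by
  unfold gapAt
  by_cases hm : 0 < marg Q x
  · rw [if_pos hm]
    have h1 : condProb Q y x ≤ univ.sup' univ_nonempty (fun y => condProb Q y x) :=
      Finset.le_sup' (fun y => condProb Q y x) (mem_univ y)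
    have e1 : Q (x, y) = condProb Q y x * marg Q x := by
      unfold condProb; field_simp
    have e2 : Q (x, y1) = condProb Q y1 x * marg Q x := by
      unfold condProb; field_simp
    rw [e1, e2]
    nlinarith
  · rw [if_neg hm]
    have hm0 : marg Q x = 0 :=
      le_antisymm (not_lt.mp hm) (Finset.sum_nonneg fun y _ => hQ _)
    have hz : ∀ y', Q (x, y') = 0 := fun y' =>
      (Finset.sum_eq_zero_iff_of_nonneg (fun y _ => hQ (x, y))).mp hm0 y' (mem_univ _)
    simp [hz, hm0]

/-- pointwise sufficient condition, feature-label, ε > 0. -/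
theorem pointwise_feature_label_eps_pos
    [Fintype X] [Fintype Y] [Nonempty X] [Nonempty Y] [DecidableEq X] [DecidableEq Y]
    (P0 P2 : X × Y → ℝ) (hP0 : IsPMF P0) (hP2 : IsPMF P2)
    (g1 : X → X) (hg1 : Function.Injective g1) (y1 : Y)
    (P1 : X × Y → ℝ) (hP1 : P1 = pushforward (fun w => (g1 w.1, y1)) P0)
    (α1 α2 : ℝ) (hα1 : 0 < α1) (hα2 : 0 ≤ α2) (hα : α1 + α2 ≤ 1)
    (ε1 : ℝ) (hε0 : 0 ≤ ε1) (hε1 : ε1 < 1 / 2)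
    (P : X × Y → ℝ) (hP : P = fun z => α1 * P1 z + α2 * P2 z + (1 - (α1 + α2)) * P0 z)
    (x : X) (hx : x ∈ Finset.univ.image g1) (hx1 : 0 < marg P1 x)
    (hcond : α1 * (1 - 2 * ε1) * marg P1 x >
      α2 * marg P2 x * ((1 - ε1) * gapAt P2 x y1 + ε1)
        + (1 - (α1 + α2)) * marg P0 x * ((1 - ε1) * gapAt P0 x y1 + ε1)) :
    ∀ y, y ≠ y1 → P (x, y1) > P (x, y) + ε1 / (1 - ε1) * marg P x := by
  intro y hy
  have hε' : (0:ℝ) < 1 - ε1 := by linarith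
  -- P1 vanishes off the label y1
  have hP1y : ∀ y', y' ≠ y1 → P1 (x, y') = 0 := by
    intro y' hy'
    rw [hP1]
    unfold pushforward
    rw [Finset.filter_eq_empty_iff.mpr, Finset.sum_empty]
    intro w _ h
    exact hy' ((Prod.mk.injEq _ _ _ _).mp h).2.symm
  have hm1 : marg P1 x = P1 (x, y1) := by
    unfold marg
    exact Finset.sum_eq_single_of_mem y1 (mem_univ _)
      (fun b _ hb => hP1y b hb)
  -- marginal of the mixture
  have hmargP : marg P x = α1 * marg P1 x + α2 * marg P2 x + (1 - (α1 + α2)) * marg P0 x := by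
    unfold marg
    rw [hP]
    simp [Finset.sum_add_distrib, Finset.mul_sum]
  -- gap bounds
  have h2 : P2 (x, y) - P2 (x, y1) ≤ marg P2 x * gapAt P2 x y1 :=
    gap_bound_aux P2 hP2.1 x y1 y
  have h0 : P0 (x, y) - P0 (x, y1) ≤ marg P0 x * gapAt P0 x y1 :=
    gap_bound_aux P0 hP0.1 x y1 y
  have hm2 : 0 ≤ marg P2 x := Finset.sum_nonneg fun y _ => hP2.1 _
  have hm0 : 0 ≤ marg P0 x := Finset.sum_nonneg fun y _ => hP0.1 _
  have h1α : 0 ≤ 1 - (α1 + α2) := by linarith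
  -- key inequality (multiplied through by (1 - ε1))
  set A := α1 * P1 (x, y1) + α2 * P2 (x, y1) + (1 - (α1 + α2)) * P0 (x, y1) with hA
  set B := α1 * P1 (x, y) + α2 * P2 (x, y) + (1 - (α1 + α2)) * P0 (x, y) with hB
  set M := α1 * marg P1 x + α2 * marg P2 x + (1 - (α1 + α2)) * marg P0 x with hM
  have hP1y0 : P1 (x, y) = 0 := hP1y y hy
  have key : ε1 * M < (A - B) * (1 - ε1) := by
    have t2 : α2 * (1 - ε1) * (P2 (x, y) - P2 (x, y1)) ≤
        α2 * (1 - ε1) * (marg P2 x * gapAt P2 x y1) :=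
      mul_le_mul_of_nonneg_left h2 (mul_nonneg hα2 hε'.le)
    have t0 : (1 - (α1 + α2)) * (1 - ε1) * (P0 (x, y) - P0 (x, y1)) ≤
        (1 - (α1 + α2)) * (1 - ε1) * (marg P0 x * gapAt P0 x y1) :=
      mul_le_mul_of_nonneg_left h0 (mul_nonneg h1α hε'.le)
    rw [hm1] at hcond
    rw [hA, hB, hM, hP1y0, hm1]
    nlinarith [hcond, t2, t0]
  have hPA : P (x, y1) = A := by rw [hP]
  have hPB : P (x, y) = B := by rw [hP]
  rw [hPA, hPB, hmargP, gt_iff_lt, ← lt_sub_iff_add_lt', div_mul_eq_mul_div,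
    div_lt_iff₀ hε']
  linarith [key]
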